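/- For all k ∈ {2,3} and l ∈ {0,1}, the following identity holds in H: z^k·t·s·t·s·t^l = c·z^k·s·t·s·t^l + a·d·z^k·s·t^l + b·c·d·z^k·t^{l−1} + a·b·d²·z^k·t⁻¹·s⁻¹·t^{l−1} + b²·d²·z^{k−1}·u·s·t²·u·t^l. -/

import Mathlib

noncomputable section

open scoped TensorProduct

/-- The Laurent polynomial ring `ℤ[a, b, b⁻¹, c, d, d⁻¹]`, realised as the monoid algebra of
`ℕ × ℕ × ℤ × ℤ` over `ℤ`; the four coordinates record the exponents of `a`, `c`, `b`, `d`
respectively (`b` and `d` are invertible, so their exponents range over all of `ℤ`). -/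
abbrev Rr : Type := AddMonoidAlgebra ℤ (ℕ × ℕ × ℤ × ℤ)

namespace G13

/-- The indeterminate `a`. -/
def pa : Rr := AddMonoidAlgebra.single (1, 0, 0, 0) 1
/-- The indeterminate `c`. -/
def pc : Rr := AddMonoidAlgebra.single (0, 1, 0, 0) 1
/-- The invertible indeterminate `b`. -/
def pb : Rr := AddMonoidAlgebra.single (0, 0, 1, 0) 1
/-- The invertible indeterminate `d`. -/
def pd : Rr := AddMonoidAlgebra.single (0, 0, 0, 1) 1
/-- `b⁻¹`. -/
def pbInv : Rr := AddMonoidAlgebra.single (0, 0, -1, 0) 1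
/-- `d⁻¹`. -/
def pdInv : Rr := AddMonoidAlgebra.single (0, 0, 0, -1) 1

def fS : FreeAlgebra Rr (Fin 3) := FreeAlgebra.ι Rr 0
def fT : FreeAlgebra Rr (Fin 3) := FreeAlgebra.ι Rr 1
def fU : FreeAlgebra Rr (Fin 3) := FreeAlgebra.ι Rr 2

/-- The defining relations of the generic Hecke algebra of `G₁₃`:
`tust = ustu`, `stust = ustus`, `s² = a·s + b`, `t² = c·t + d`, `u² = c·u + d`. -/
inductive Rel : FreeAlgebra Rr (Fin 3) → FreeAlgebra Rr (Fin 3) → Prop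
  | braid1 : Rel (fT * fU * fS * fT) (fU * fS * fT * fU)
  | braid2 : Rel (fS * fT * fU * fS * fT) (fU * fS * fT * fU * fS)
  | relS : Rel (fS * fS)
      (algebraMap Rr (FreeAlgebra Rr (Fin 3)) pa * fS + algebraMap Rr (FreeAlgebra Rr (Fin 3)) pb)
  | relT : Rel (fT * fT)
      (algebraMap Rr (FreeAlgebra Rr (Fin 3)) pc * fT + algebraMap Rr (FreeAlgebra Rr (Fin 3)) pd)
  | relU : Rel (fU * fU)
      (algebraMap Rr (FreeAlgebra Rr (Fin 3)) pc * fU + algebraMap Rr (FreeAlgebra Rr (Fin 3)) pd)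

/-- The generic Hecke algebra of `G₁₃`. -/
abbrev H := RingQuot Rel

/-- The generator `s` of `H`. -/
def s : H := RingQuot.mkAlgHom Rr Rel fS
/-- The generator `t` of `H`. -/
def t : H := RingQuot.mkAlgHom Rr Rel fT
/-- The generator `u` of `H`. -/
def u : H := RingQuot.mkAlgHom Rr Rel fU

/-- The central element `z = (stu)³`. -/
def z : H := (s * t * u) ^ 3

/-- Scalars of `Rr` viewed inside `H`. -/
def sc : Rr → H := algebraMap Rr H

/-- The twelve elements `E₁, …, E₁₂`: `1, u, s, ts, su, us, tu, tsu, tus, sts, stu, uts`. -/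
def E : Fin 12 → H :=
  ![1, u, s, t * s, s * u, u * s, t * u, t * s * u, t * u * s, s * t * s, s * t * u, u * t * s]

/-- The family `B₁₃ = (b₁, …, b₉₆)`, indexed here by `Fin 96` (so `B i = b_{i+1}`):
`b_{24k+12l+m} = z^k · E_m · t^l` for `k ∈ {0,…,3}`, `l ∈ {0,1}`, `m ∈ {1,…,12}`. -/
def B : Fin 96 → H := fun i =>
  z ^ (i.val / 24) * E ⟨i.val % 12, by omega⟩ * t ^ (i.val / 12 % 2)

/-- The inverse of the generator `s`: `s⁻¹ = b⁻¹·s − a·b⁻¹·1`. -/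
def sInv : H := sc pbInv * s - sc (pa * pbInv)
/-- The inverse of the generator `t`: `t⁻¹ = d⁻¹·t − c·d⁻¹·1`. -/
def tInv : H := sc pdInv * t - sc (pc * pdInv)
/-- The inverse of the generator `u`: `u⁻¹ = d⁻¹·u − c·d⁻¹·1`. -/
def uInv : H := sc pdInv * u - sc (pc * pdInv)

/-- Integer powers of `t`: `tP n = tⁿ` for `n ≥ 0`, and `tP n = (t⁻¹)^(−n)` for `n < 0`. -/
def tP : ℤ → H := fun n => if 0 ≤ n then t ^ n.toNat else tInv ^ (-n).toNat

/-! ### pinned arithmetic helper lemmas (instances on `H` are quirky) -/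

lemma msub (x y w : H) : x * (y - w) = x * y - x * w := mul_sub x y w
lemma smulH (x y w : H) : (x - y) * w = x * w - y * w := sub_mul x y w
lemma addsub (x y : H) : x + (y - x) = y := add_sub_cancel x y
lemma addsubl (x y : H) : x + y - x = y := add_sub_cancel_left x y

lemma lcomm (r : Rr) (x y : H) : x * (sc r * y) = sc r * (x * y) := Algebra.left_comm x r y
lemma rcomm (r : Rr) (x : H) : x * sc r = sc r * x := (Algebra.commutes r x).symm
lemma scmul (r r' : Rr) : sc (r * r') = sc r * sc r' := map_mul (algebraMap Rr H) r r'
lemma scone : sc 1 = 1 := map_one (algebraMap Rr H)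
lemma smuldef (r : Rr) (x : H) : r • x = sc r * x := Algebra.smul_def r x

/-! ### scalar computations -/

lemma hpb : pb * pbInv = 1 := by
  simp [pb, pbInv, AddMonoidAlgebra.single_mul_single, AddMonoidAlgebra.one_def]; rfl

lemma hpd : pd * pdInv = 1 := by
  simp [pd, pdInv, AddMonoidAlgebra.single_mul_single, AddMonoidAlgebra.one_def]; rfl

/-! ### the defining relations, in `H` -/

lemma relS' : s * s = sc pa * s + sc pb := by
  have h := RingQuot.mkAlgHom_rel Rr Rel.relS
  simpa [s, sc, map_mul, map_add, AlgHom.commutes] using h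

lemma relT' : t * t = sc pc * t + sc pd := by
  have h := RingQuot.mkAlgHom_rel Rr Rel.relT
  simpa [t, sc, map_mul, map_add, AlgHom.commutes] using h

lemma hb1 : t * u * s * t = u * s * t * u := by
  have h := RingQuot.mkAlgHom_rel Rr Rel.braid1
  simpa [s, t, u, map_mul] using h

lemma hb2 : s * t * u * s * t = u * s * t * u * s := by
  have h := RingQuot.mkAlgHom_rel Rr Rel.braid2
  simpa [s, t, u, map_mul] using h

/-! ### inverses -/

lemma s_eq : s = sc pa + sc pb * sInv := by
  have e1 : pd * (pc * pdInv) = pc := by rw [mul_comm pc pdInv, ← mul_assoc, hpd, one_mul]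
  have e2 : pb * (pa * pbInv) = pa := by rw [mul_comm pa pbInv, ← mul_assoc, hpb, one_mul]
  rw [sInv, msub, ← mul_assoc, ← scmul, ← scmul, hpb, scone, one_mul, e2]
  exact (addsub (sc pa) s).symm

lemma t_eq : t = sc pc + sc pd * tInv := by
  have e1 : pd * (pc * pdInv) = pc := by rw [mul_comm pc pdInv, ← mul_assoc, hpd, one_mul]
  rw [tInv, msub, ← mul_assoc, ← scmul, ← scmul, hpd, scone, one_mul, e1]
  exact (addsub (sc pc) t).symm

lemma sInv_s : sInv * s = 1 := by
  rw [sInv, smulH, mul_assoc, relS', mul_add, ← mul_assoc, ← scmul, ← scmul,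
    mul_comm pbInv pa, mul_comm pbInv pb, hpb, scone]
  exact addsubl (sc (pa * pbInv) * s) 1

lemma s_sInv : s * sInv = 1 := by
  rw [sInv, msub, lcomm, rcomm, relS', mul_add, ← mul_assoc, ← scmul, ← scmul,
    mul_comm pbInv pa, mul_comm pbInv pb, hpb, scone]
  exact addsubl (sc (pa * pbInv) * s) 1

lemma tInv_t : tInv * t = 1 := by
  rw [tInv, smulH, mul_assoc, relT', mul_add, ← mul_assoc, ← scmul, ← scmul,
    mul_comm pdInv pc, mul_comm pdInv pd, hpd, scone]
  exact addsubl (sc (pc * pdInv) * t) 1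

lemma t_tInv : t * tInv = 1 := by
  rw [tInv, msub, lcomm, rcomm, relT', mul_add, ← mul_assoc, ← scmul, ← scmul,
    mul_comm pdInv pc, mul_comm pdInv pd, hpd, scone]
  exact addsubl (sc (pc * pdInv) * t) 1

lemma one_s : (1 : H) = sc pa * sInv + sc pb * (sInv * sInv) := by
  conv_lhs => rw [← sInv_s, s_eq]
  rw [mul_add, rcomm, lcomm]

/-! ### contextual cancellation -/

lemma tc (y : H) : t * (tInv * y) = y := by rw [← mul_assoc, t_tInv, one_mul]
lemma sc' (y : H) : s * (sInv * y) = y := by rw [← mul_assoc, s_sInv, one_mul]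
lemma tci (y : H) : tInv * (t * y) = y := by rw [← mul_assoc, tInv_t, one_mul]

/-! ### substitution lemmas -/

lemma tsub (x y : H) : x * (t * y) = pc • (x * y) + pd • (x * (tInv * y)) := by
  conv_lhs => rw [t_eq]
  rw [add_mul, mul_add, mul_assoc, lcomm, lcomm, smuldef, smuldef]

lemma ssub (x y : H) : x * (s * y) = pa • (x * y) + pb • (x * (sInv * y)) := by
  conv_lhs => rw [s_eq]
  rw [add_mul, mul_add, mul_assoc, lcomm, lcomm, smuldef, smuldef]

lemma onesub (x y : H) : x * y = pa • (x * (sInv * y)) + pb • (x * (sInv * (sInv * y))) := by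
  conv_lhs => rw [show x * y = x * (1 * y) by rw [one_mul], one_s]
  rw [add_mul, mul_add, mul_assoc, mul_assoc, lcomm, lcomm, smuldef, smuldef]
  simp only [mul_assoc]

/-! ### braid word manipulation -/

lemma hb1x (x : H) : t * (u * (s * (t * x))) = u * (s * (t * (u * x))) := by
  have h := congrArg (· * x) hb1
  simpa only [mul_assoc] using h

lemma hb2x (x : H) : s * (t * (u * (s * (t * x)))) = u * (s * (t * (u * (s * x)))) := by
  have h := congrArg (· * x) hb2
  simpa only [mul_assoc] using h

lemma hb1r : t * (u * (s * t)) = u * (s * (t * u)) := by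
  simpa only [mul_assoc] using hb1

lemma hb2r : s * (t * (u * (s * t))) = u * (s * (t * (u * s))) := by
  simpa only [mul_assoc] using hb2

lemma hsu : s * (u * (s * (t * u))) = u * (s * (t * (u * s))) := by
  rw [← hb1r, hb2r]

lemma hsux (x : H) : s * (u * (s * (t * (u * x)))) = u * (s * (t * (u * (s * x)))) := by
  rw [← hb1x x, hb2x x]

/-- the key identity `z = u·s·t²·u·s·t·s·t` -/
lemma key : z = u * (s * (t * (t * (u * (s * (t * (s * t))))))) := by
  have hz : z = s * (t * (u * (s * (t * (u * (s * (t * u))))))) := by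
    rw [z, show (s * t * u) ^ 3 = (s * t * u) ^ 2 * (s * t * u) from pow_succ _ 2, pow_two]
    simp only [mul_assoc]
  have h1 : z = u * (s * (t * (u * (u * (s * (t * (u * s))))))) := by
    rw [hz, hb1x (u * (s * (t * u))), hsux (u * (s * (t * u))), hsu]
  have h2 : u * (s * (t * (t * (u * (s * (t * (s * t))))))) =
      u * (s * (t * (u * (u * (s * (t * (u * s))))))) := by
    rw [hb1x (s * t), hb2r]
  rw [h1, h2]

lemma keyx (x : H) :
    z * (tInv * (sInv * (tInv * (sInv * x)))) = u * (s * (t * (t * (u * x)))) := by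
  rw [key]
  simp only [mul_assoc]
  rw [tc, sc', tc, sc']

/-! ### the core identity -/

lemma core0 (x w : H) :
    x * (z * (t * (s * (t * (s * w))))) =
      pc • (x * (z * (s * (t * (s * w))))) + (pa * pd) • (x * (z * (s * w))) +
        (pb * pc * pd) • (x * (z * (tInv * w))) +
        (pa * pb * pd ^ 2) • (x * (z * (tInv * (sInv * (tInv * w))))) +
        (pb ^ 2 * pd ^ 2) • (x * (u * (s * (t * (t * (u * w)))))) := by
  have h1 : x * (z * (t * (s * (t * (s * w))))) =
      pc • (x * (z * (s * (t * (s * w))))) + pd • (x * (z * (tInv * (s * (t * (s * w)))))) := by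
    simpa only [mul_assoc] using tsub (x * z) (s * (t * (s * w)))
  have h2 : x * (z * (tInv * (s * (t * (s * w))))) =
      pa • (x * (z * (s * w))) + pb • (x * (z * (tInv * (sInv * (t * (s * w)))))) := by
    have h := ssub (x * (z * tInv)) (t * (s * w))
    simp only [mul_assoc] at h
    rw [h, tci]
  have h3 : x * (z * (tInv * (sInv * (t * (s * w))))) =
      pa • (x * (z * (tInv * (sInv * (t * w))))) +
        pb • (x * (z * (tInv * (sInv * (t * (sInv * w)))))) := by
    simpa only [mul_assoc] using ssub (x * (z * (tInv * (sInv * t)))) w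
  have h4 : x * (z * (tInv * (sInv * (t * w)))) =
      pc • (x * (z * (tInv * (sInv * w)))) +
        pd • (x * (z * (tInv * (sInv * (tInv * w))))) := by
    simpa only [mul_assoc] using tsub (x * (z * (tInv * sInv))) w
  have h5 : x * (z * (tInv * (sInv * (t * (sInv * w))))) =
      pc • (x * (z * (tInv * (sInv * (sInv * w))))) +
        pd • (x * (z * (tInv * (sInv * (tInv * (sInv * w)))))) := by
    simpa only [mul_assoc] using tsub (x * (z * (tInv * sInv))) (sInv * w)
  have h6 : x * (z * (tInv * (sInv * (tInv * (sInv * w))))) =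
      x * (u * (s * (t * (t * (u * w))))) := by
    have h := congrArg (x * ·) (keyx w)
    simpa only [mul_assoc] using h
  have h8 : x * (z * (tInv * w)) =
      pa • (x * (z * (tInv * (sInv * w)))) + pb • (x * (z * (tInv * (sInv * (sInv * w))))) := by
    simpa only [mul_assoc] using onesub (x * (z * tInv)) w
  rw [h1, h2, h3, h4, h5, h6, h8]
  module

/-- `core` in the final, `sc`-phrased, left-associated form. -/
lemma core (x w : H) :
    x * z * t * s * t * s * w =
      sc pc * (x * z * s * t * s * w) + sc (pa * pd) * (x * z * s * w) +
        sc (pb * pc * pd) * (x * z * (tInv * w)) +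
        sc (pa * pb * pd ^ 2) * (x * z * tInv * sInv * (tInv * w)) +
        sc (pb ^ 2 * pd ^ 2) * (x * u * s * (t * t) * u * w) := by
  have h := core0 x w
  simp only [smuldef] at h
  simp only [mul_assoc]
  simpa only [mul_assoc] using h

/-- **special case 8.** For `k ∈ {2,3}`, `l ∈ {0,1}`:
`z^k·tsts·t^l = c·z^k·sts·t^l + ad·z^k·s·t^l + bcd·z^k·t^{l−1}
 + abd²·z^k·t⁻¹s⁻¹·t^{l−1} + b²d²·z^{k−1}·ust²u·t^l`. -/
theorem stmt11 : ∀ k ∈ ({2, 3} : Set ℕ), ∀ l ∈ ({0, 1} : Set ℤ),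
    z ^ k * t * s * t * s * tP l =
      sc pc * (z ^ k * s * t * s * tP l) + sc (pa * pd) * (z ^ k * s * tP l) +
        sc (pb * pc * pd) * (z ^ k * tP (l - 1)) +
        sc (pa * pb * pd ^ 2) * (z ^ k * tInv * sInv * tP (l - 1)) +
        sc (pb ^ 2 * pd ^ 2) * (z ^ (k - 1) * u * s * t ^ 2 * u * tP l) := by
  intro k hk l hl
  simp only [Set.mem_insert_iff, Set.mem_singleton_iff] at hk hl
  have hpt : t ^ 2 = t * t := pow_two t
  rcases hk with rfl | rfl <;> rcases hl with rfl | rfl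
  · rw [show tP ((0 : ℤ) - 1) = tInv * tP 0 from by norm_num [tP, pow_one, mul_one],
      show z ^ (2 : ℕ) = z ^ (2 - 1) * z from pow_succ z 1, hpt]
    exact core (z ^ (2 - 1)) (tP 0)
  · rw [show tP ((1 : ℤ) - 1) = tInv * tP 1 from by
        norm_num [tP, pow_one, pow_zero]; exact tInv_t.symm,
      show z ^ (2 : ℕ) = z ^ (2 - 1) * z from pow_succ z 1, hpt]
    exact core (z ^ (2 - 1)) (tP 1)
  · rw [show tP ((0 : ℤ) - 1) = tInv * tP 0 from by norm_num [tP, pow_one, mul_one],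
      show z ^ (3 : ℕ) = z ^ (3 - 1) * z from pow_succ z 2, hpt]
    exact core (z ^ (3 - 1)) (tP 0)
  · rw [show tP ((1 : ℤ) - 1) = tInv * tP 1 from by
        norm_num [tP, pow_one, pow_zero]; exact tInv_t.symm,
      show z ^ (3 : ℕ) = z ^ (3 - 1) * z from pow_succ z 2, hpt]
    exact core (z ^ (3 - 1)) (tP 1)

end G13
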